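/- Let R and S be domains, let Z₀ ⊆ Z(R) be a subring of the center of R, and let f : R → S be a ring morphism. Assume that the central localization Q(R) = Frac(Z(R)) ⊗_{Z(R)} R is finite-dimensional over the field Frac(Z₀), and that f maps every nonzero element of Z₀ to a nonzero element of the center Z(S) of S. Then f is injective. -/
import Mathlib


open TensorProduct

set_option synthInstance.maxHeartbeats 1000000
set_option maxHeartbeats 1000000

/-- The central localization `Q(R) = Frac(Z(R)) ⊗_{Z(R)} R` of a ring `R`. -/
abbrev centralLocalization (R : Type) [Ring R] : Type :=
  TensorProduct (Subring.center R) (FractionRing (Subring.center R)) R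

/-- The field morphism `Frac(Z₀) → Frac(Z)` induced by the inclusion of a subring `Z₀ ⊆ Z`
of a commutative domain `Z`. -/
noncomputable def fracLift (Z : Type) [CommRing Z] [IsDomain Z] (Z₀ : Subring Z) :
    FractionRing Z₀ →+* FractionRing Z :=
  IsFractionRing.lift (g := (algebraMap Z (FractionRing Z)).comp Z₀.subtype)
    ((IsFractionRing.injective Z (FractionRing Z)).comp Subtype.val_injective)

/-- Abstract linear-dependence-with-integral-coefficients lemma. -/
theorem stmt8_dep (A K M : Type) [CommRing A] [IsDomain A] [Field K] [Algebra A K]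
    [IsFractionRing A K] [AddCommGroup M] [Module K M] [Module.Finite K M] (v : ℕ → M) :
    ∃ (n : ℕ) (a : ℕ → A), (∃ i < n, a i ≠ 0) ∧
      (∑ i ∈ Finset.range n, (algebraMap A K (a i)) • v i) = 0 := by
  set d := Module.finrank K M with hd
  set vv : Fin (d + 1) → M := fun i => v i with hvv
  have hdep : ¬ LinearIndependent K vv := by
    intro h
    have hle := h.fintype_card_le_finrank
    rw [Fintype.card_fin] at hle
    omega
  obtain ⟨g, hg0, i₀, hgi₀⟩ := Fintype.not_linearIndependent_iff.mp hdep
  obtain ⟨b, hb⟩ := IsLocalization.exist_integer_multiples (nonZeroDivisors A)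
    (Finset.univ : Finset (Fin (d + 1))) g
  choose a haa using fun i => hb i (Finset.mem_univ i)
  have hsum0 : (∑ i : Fin (d + 1), (algebraMap A K (a i)) • vv i) = 0 := by
    have e1 : ∀ i : Fin (d + 1), (algebraMap A K (a i)) • vv i
        = (algebraMap A K b) • (g i • vv i) := by
      intro i
      rw [haa i, Algebra.smul_def, mul_smul]
    rw [Finset.sum_congr rfl (fun i _ => e1 i), ← Finset.smul_sum, hg0, smul_zero]
  have hai₀ : a i₀ ≠ 0 := by
    intro h
    apply hgi₀
    have hh := haa i₀
    rw [h, map_zero] at hh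
    have hb0 : algebraMap A K b ≠ 0 := by
      rw [Ne, IsFractionRing.to_map_eq_zero_iff]
      exact nonZeroDivisors.coe_ne_zero b
    rw [Algebra.smul_def] at hh
    rcases mul_eq_zero.mp hh.symm with h' | h'
    · exact absurd h' hb0
    · exact h'
  refine ⟨d + 1, fun i => if h : i < d + 1 then a ⟨i, h⟩ else 0, ⟨i₀, i₀.isLt, ?_⟩, ?_⟩
  · simpa [i₀.isLt] using hai₀
  · rw [← hsum0, Finset.sum_range
      (fun i => (algebraMap A K (if h : i < d + 1 then a ⟨i, h⟩ else 0)) • v i)]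
    apply Finset.sum_congr rfl
    intro i _
    simp only [hvv, i.isLt, dif_pos]

set_option maxHeartbeats 4000000 in
set_option synthInstance.maxHeartbeats 4000000 in
/-- Auxiliary: every element of `R` satisfies a nontrivial polynomial relation with
coefficients in `Z₀`, given the finiteness hypothesis. -/
theorem stmt8_aux (R : Type) [Ring R] [IsDomain R]
    (Z₀ : Subring (Subring.center R))
    (hfin :
      letI : Module (FractionRing Z₀) (centralLocalization R) :=
        Module.compHom (centralLocalization R) (fracLift (Subring.center R) Z₀)
      Module.Finite (FractionRing Z₀) (centralLocalization R))
    (r : R) :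
    ∃ (n : ℕ) (a : ℕ → Z₀), (∃ i < n, a i ≠ 0) ∧
      (∑ i ∈ Finset.range n, ((a i : Subring.center R) : R) * r ^ i) = 0 := by
  letI instK : Module (FractionRing Z₀) (centralLocalization R) :=
    Module.compHom (centralLocalization R) (fracLift (Subring.center R) Z₀)
  have h1 : ∀ (q : FractionRing Z₀) (m : centralLocalization R),
      q • m = fracLift (Subring.center R) Z₀ q • m := fun q m => rfl
  have h2 : ∀ (c : Z₀) (m : R),
      (algebraMap Z₀ (FractionRing Z₀) c) •
          ((1 : FractionRing (Subring.center R)) ⊗ₜ[Subring.center R] m)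
        = (1 : FractionRing (Subring.center R)) ⊗ₜ[Subring.center R]
            (((c : Subring.center R) : R) * m) := by
    intro c m
    rw [h1, fracLift, IsFractionRing.lift_algebraMap, RingHom.comp_apply]
    rw [algebraMap_smul, ← TensorProduct.tmul_smul]
    congr 1
  haveI : Module.Finite (FractionRing Z₀) (centralLocalization R) := hfin
  obtain ⟨n, a, hnt, hrel⟩ := stmt8_dep Z₀ (FractionRing Z₀) (centralLocalization R)
    (fun i => (1 : FractionRing (Subring.center R)) ⊗ₜ[Subring.center R] (r ^ i))
  refine ⟨n, a, hnt, ?_⟩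
  have hsum0 : ((1 : FractionRing (Subring.center R)) ⊗ₜ[Subring.center R]
      (∑ i ∈ Finset.range n, ((a i : Subring.center R) : R) * r ^ i)
      : centralLocalization R) = 0 := by
    rw [TensorProduct.tmul_sum, ← hrel]
    exact Finset.sum_congr rfl (fun i _ => (h2 (a i) (r ^ i)).symm)
  have hloc : IsLocalizedModule (nonZeroDivisors (Subring.center R))
      (TensorProduct.mk (Subring.center R) (FractionRing (Subring.center R)) R 1) :=
    (isLocalizedModule_iff_isBaseChange (nonZeroDivisors (Subring.center R))
      (FractionRing (Subring.center R)) _).mpr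
      (TensorProduct.isBaseChange (Subring.center R) R (FractionRing (Subring.center R)))
  obtain ⟨s, hs⟩ := (hloc.eq_zero_iff (nonZeroDivisors (Subring.center R))).mp hsum0
  have hsz : (((s : Subring.center R) : R)) ≠ 0 := by
    have h0 : (s : Subring.center R) ≠ 0 := nonZeroDivisors.coe_ne_zero s
    exact fun h => h0 (Subtype.ext h)
  rw [Submonoid.smul_def, Subring.smul_def, smul_eq_mul] at hs
  rcases mul_eq_zero.mp hs with h | h
  · exact absurd h hsz
  · exact h

/-- let `R, S` be domains, `Z₀ ⊆ Z(R)` a subring of the center of `R`, and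
`f : R → S` a ring morphism.  Assume `Q(R)` is finite-dimensional over `Frac(Z₀)` and that `f`
maps every nonzero element of `Z₀` to a nonzero element of the center `Z(S)`.  Then `f` is
injective. -/
theorem stmt_8 (R S : Type) [Ring R] [IsDomain R] [Ring S] [IsDomain S]
    (Z₀ : Subring (Subring.center R)) (f : R →+* S)
    (hfin :
      letI : Module (FractionRing Z₀) (centralLocalization R) :=
        Module.compHom (centralLocalization R) (fracLift (Subring.center R) Z₀)
      Module.Finite (FractionRing Z₀) (centralLocalization R))
    (hf : ∀ x : Z₀, x ≠ 0 →
      f ((x : Subring.center R) : R) ∈ Subring.center S ∧ f ((x : Subring.center R) : R) ≠ 0) :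
    Function.Injective f := by
  rw [injective_iff_map_eq_zero]
  intro r hr
  by_contra hr0
  have key : ∀ (n : ℕ) (a : ℕ → Z₀),
      (∑ i ∈ Finset.range n, ((a i : Subring.center R) : R) * r ^ i) = 0 → ∀ i < n, a i = 0 := by
    intro n
    induction n with
    | zero => intro a _ i hi; omega
    | succ n ih =>
      intro a ha
      have h0 : a 0 = 0 := by
        by_contra h0
        refine (hf (a 0) h0).2 ?_
        have hfa := congrArg f ha
        rw [map_sum, map_zero] at hfa
        have e : ∀ i ∈ Finset.range (n + 1),
            f (((a i : Subring.center R) : R) * r ^ i)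
              = f ((a i : Subring.center R) : R) * (0 : S) ^ i := by
          intro i _; rw [map_mul, map_pow, hr]
        rw [Finset.sum_congr rfl e, Finset.sum_range_succ'] at hfa
        simpa using hfa
      have ha' : (∑ i ∈ Finset.range n, ((a (i + 1) : Subring.center R) : R) * r ^ i) * r
          = 0 := by
        rw [Finset.sum_mul]
        have e : ∀ i ∈ Finset.range n,
            (((a (i + 1) : Subring.center R) : R) * r ^ i) * r
              = ((a (i + 1) : Subring.center R) : R) * r ^ (i + 1) := by
          intro i _; rw [mul_assoc, ← pow_succ]
        rw [Finset.sum_congr rfl e]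
        rw [Finset.sum_range_succ', h0] at ha
        simpa using ha
      have hsum : (∑ i ∈ Finset.range n, ((a (i + 1) : Subring.center R) : R) * r ^ i) = 0 := by
        rcases mul_eq_zero.mp ha' with h | h
        · exact h
        · exact absurd h hr0
      intro i hi
      match i with
      | 0 => exact h0
      | (j + 1) => exact ih (fun k => a (k + 1)) hsum j (by omega)
  obtain ⟨n, a, ⟨i₀, hi₀, hai₀⟩, hrel⟩ := stmt8_aux R Z₀ hfin r
  exact hai₀ (key n a hrel i₀ hi₀)
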